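/- For any priority π, the draft rule φ^π is respectful of the priority π: for every problem (≿, X) and agents i, j with π(i) < π(j), one has φ^π_i(≿, X) ≿_i^PD φ^π_j(≿, X). -/
import Mathlib


open Finset

noncomputable section

abbrev Obj := ℕ

def PD (r : Obj → Obj → Prop) (S T : Finset Obj) : Prop :=
  ∃ μ : {x // x ∈ T} → {x // x ∈ S}, Function.Injective μ ∧ ∀ x, r (μ x).1 x.1

def StrictPD (r : Obj → Obj → Prop) (S T : Finset Obj) : Prop :=
  PD r S T ∧ ¬ PD r T S

def LinProfile {n : ℕ} (pref : Fin n → Obj → Obj → Prop) : Prop :=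
  ∀ i, IsLinearOrder Obj (pref i)

def IsAlloc {n : ℕ} (A : Fin n → Finset Obj) (X : Finset Obj) : Prop :=
  (∀ i, A i ⊆ X) ∧ ∀ i j, i ≠ j → Disjoint (A i) (A j)

open Classical in
def topOf (r : Obj → Obj → Prop) (X : Finset Obj) : Obj :=
  if h : ∃ m ∈ X, ∀ x ∈ X, r m x then h.choose else 0

def remaining {n : ℕ} (pref : Fin n → Obj → Obj → Prop) (f : ℕ → Fin n)
    (X : Finset Obj) : ℕ → Finset Obj
  | 0 => X
  | k + 1 => (remaining pref f X k).erase (topOf (pref (f k)) (remaining pref f X k))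

def draft {n : ℕ} (pref : Fin n → Obj → Obj → Prop) (f : ℕ → Fin n)
    (X : Finset Obj) (i : Fin n) : Finset Obj :=
  ((Finset.range X.card).filter (fun k => f k = i)).image
    (fun k => topOf (pref (f k)) (remaining pref f X k))

def roundRobin {n : ℕ} (hn : 0 < n) (π : Equiv.Perm (Fin n)) (k : ℕ) : Fin n :=
  π.symm ⟨k % n, Nat.mod_lt k hn⟩

def draftPi {n : ℕ} (hn : 0 < n) (pref : Fin n → Obj → Obj → Prop)
    (π : Equiv.Perm (Fin n)) (X : Finset Obj) (i : Fin n) : Finset Obj :=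
  draft pref (roundRobin hn π) X i


lemma exists_top (r : Obj → Obj → Prop) (hr : IsLinearOrder Obj r) {S : Finset Obj}
    (hS : S.Nonempty) : ∃ m ∈ S, ∀ x ∈ S, r m x := by
  haveI := hr
  induction S using Finset.induction with
  | empty => exact absurd hS (by simp)
  | @insert a S ha ih =>
    rcases S.eq_empty_or_nonempty with h | h
    · subst h
      exact ⟨a, by simp, by simp [refl_of r a]⟩
    · obtain ⟨m, hm, hmax⟩ := ih h
      rcases total_of r m a with hma | ham
      · refine ⟨m, by simp [hm], ?_⟩
        intro x hx
        rcases Finset.mem_insert.1 hx with rfl | hx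
        · exact hma
        · exact hmax x hx
      · refine ⟨a, by simp, ?_⟩
        intro x hx
        rcases Finset.mem_insert.1 hx with rfl | hx
        · exact refl_of r x
        · exact trans_of r ham (hmax x hx)

lemma topOf_spec (r : Obj → Obj → Prop) (hr : IsLinearOrder Obj r) {S : Finset Obj}
    (hS : S.Nonempty) : topOf r S ∈ S ∧ ∀ x ∈ S, r (topOf r S) x := by
  have h := exists_top r hr hS
  rw [topOf, dif_pos h]
  exact ⟨h.choose_spec.1, h.choose_spec.2⟩

lemma remaining_card {n : ℕ} (pref : Fin n → Obj → Obj → Prop)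
    (hpref : LinProfile pref) (f : ℕ → Fin n) (X : Finset Obj) :
    ∀ k, k ≤ X.card → (remaining pref f X k).card = X.card - k := by
  intro k
  induction k with
  | zero => simp [remaining]
  | succ k ih =>
    intro hk
    have hk' : k ≤ X.card := Nat.le_of_succ_le hk
    have hcard := ih hk'
    have hne : (remaining pref f X k).Nonempty := by
      rw [← Finset.card_pos, hcard]; omega
    have hmem := (topOf_spec _ (hpref (f k)) hne).1
    rw [remaining, Finset.card_erase_of_mem hmem, hcard]
    omega

lemma remaining_ne {n : ℕ} (pref : Fin n → Obj → Obj → Prop)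
    (hpref : LinProfile pref) (f : ℕ → Fin n) (X : Finset Obj) {k : ℕ}
    (hk : k < X.card) : (remaining pref f X k).Nonempty := by
  rw [← Finset.card_pos, remaining_card pref hpref f X k (le_of_lt hk)]; omega

lemma remaining_subset {n : ℕ} (pref : Fin n → Obj → Obj → Prop) (f : ℕ → Fin n)
    (X : Finset Obj) : ∀ {k k' : ℕ}, k' ≤ k →
    remaining pref f X k ⊆ remaining pref f X k' := by
  intro k
  induction k with
  | zero => intro k' h; simp_all
  | succ k ih =>
    intro k' h
    rcases Nat.lt_or_ge k' (k+1) with h' | h'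
    · exact (Finset.erase_subset _ _).trans (ih (Nat.lt_succ_iff.1 h'))
    · have : k' = k + 1 := le_antisymm h h'
      subst this; exact subset_rfl

lemma pick_mem {n : ℕ} (pref : Fin n → Obj → Obj → Prop)
    (hpref : LinProfile pref) (f : ℕ → Fin n) (X : Finset Obj) {k : ℕ}
    (hk : k < X.card) :
    topOf (pref (f k)) (remaining pref f X k) ∈ remaining pref f X k :=
  (topOf_spec _ (hpref (f k)) (remaining_ne pref hpref f X hk)).1

lemma pick_inj {n : ℕ} (pref : Fin n → Obj → Obj → Prop)
    (hpref : LinProfile pref) (f : ℕ → Fin n) (X : Finset Obj) {k1 k2 : ℕ}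
    (h12 : k1 < k2) (hk2 : k2 < X.card) :
    topOf (pref (f k1)) (remaining pref f X k1) ≠
      topOf (pref (f k2)) (remaining pref f X k2) := by
  have hm : topOf (pref (f k2)) (remaining pref f X k2) ∈ remaining pref f X (k1+1) :=
    remaining_subset pref f X h12 (pick_mem pref hpref f X hk2)
  rw [remaining] at hm
  exact fun h => (Finset.mem_erase.1 hm).1 h.symm

theorem draft_respects_priority {n : ℕ} (hn : 0 < n) (π : Equiv.Perm (Fin n))
    (pref : Fin n → Obj → Obj → Prop) (hpref : LinProfile pref)
    (X : Finset Obj) (hX : X.Nonempty) (i j : Fin n) (hij : π i < π j) :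
    PD (pref i) (draftPi hn pref π X i) (draftPi hn pref π X j) := by
  classical
  set f : ℕ → Fin n := roundRobin hn π with hf
  set a : ℕ := (π i).val with ha
  set b : ℕ := (π j).val with hb
  have hab : a < b := hij
  have hbn : b < n := (π j).isLt
  have hfk : ∀ (k : ℕ) (c : Fin n), f k = c ↔ k % n = (π c).val := by
    intro k c
    rw [hf, roundRobin, Equiv.symm_apply_eq, Fin.ext_iff]
  set pick : ℕ → Obj := fun k => topOf (pref (f k)) (remaining pref f X k) with hpick
  -- time of a pick
  have htime : ∀ x : {x // x ∈ draftPi hn pref π X j},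
      ∃ k, k < X.card ∧ k % n = b ∧ pick k = x.1 := by
    rintro ⟨x, hx⟩
    rw [draftPi, draft, Finset.mem_image] at hx
    obtain ⟨k, hk, hkx⟩ := hx
    rw [Finset.mem_filter, Finset.mem_range] at hk
    exact ⟨k, hk.1, (hfk k j).1 hk.2, hkx⟩
  choose t ht1 ht2 ht3 using htime
  -- shifted times
  have hshift : ∀ k, k % n = b → (k - (b - a)) % n = a ∧ b - a ≤ k := by
    intro k hk
    have hdiv : k = n * (k / n) + b := by rw [← hk]; exact (Nat.div_add_mod k n).symm
    have h1 : k - (b - a) = a + n * (k / n) := by omega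
    rw [h1, Nat.add_mul_mod_self_left, Nat.mod_eq_of_lt (lt_trans hab hbn)]
    omega
  have hmemi : ∀ k, k < X.card → k % n = b →
      pick (k - (b - a)) ∈ draftPi hn pref π X i := by
    intro k hk hkb
    obtain ⟨h1, h2⟩ := hshift k hkb
    rw [draftPi, draft, Finset.mem_image]
    refine ⟨k - (b - a), ?_, rfl⟩
    rw [Finset.mem_filter, Finset.mem_range]
    exact ⟨lt_of_le_of_lt (Nat.sub_le _ _) hk, (hfk _ i).2 h1⟩
  refine ⟨fun x => ⟨pick (t x - (b - a)), hmemi (t x) (ht1 x) (ht2 x)⟩, ?_, ?_⟩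
  · -- injective
    intro x y hxy
    have h : pick (t x - (b - a)) = pick (t y - (b - a)) := congrArg Subtype.val hxy
    have hd : b - a ≤ t x := (hshift _ (ht2 x)).2
    have hd' : b - a ≤ t y := (hshift _ (ht2 y)).2
    have hteq : t x = t y := by
      by_contra hne
      rcases Nat.lt_or_ge (t x) (t y) with hlt | hge
      · have : t x - (b - a) < t y - (b - a) := by omega
        exact pick_inj pref hpref f X this
          (lt_of_le_of_lt (Nat.sub_le _ _) (ht1 y)) h
      · have hlt : t y < t x := by omega
        have : t y - (b - a) < t x - (b - a) := by omega
        exact pick_inj pref hpref f X this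
          (lt_of_le_of_lt (Nat.sub_le _ _) (ht1 x)) h.symm
    have : x.1 = y.1 := by rw [← ht3 x, ← ht3 y, hteq]
    exact Subtype.ext this
  · -- preference
    intro x
    obtain ⟨h1, h2⟩ := hshift (t x) (ht2 x)
    have hfi : f (t x - (b - a)) = i := (hfk _ i).2 h1
    have hk' : t x - (b - a) < X.card := lt_of_le_of_lt (Nat.sub_le _ _) (ht1 x)
    have hne : (remaining pref f X (t x - (b - a))).Nonempty :=
      remaining_ne pref hpref f X hk'
    have hmax := (topOf_spec _ (hpref (f (t x - (b - a)))) hne).2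
    have hxmem : x.1 ∈ remaining pref f X (t x - (b - a)) := by
      rw [← ht3 x]
      exact remaining_subset pref f X (Nat.sub_le _ _)
        (pick_mem pref hpref f X (ht1 x))
    simpa [hpick, hfi] using hmax x.1 hxmem
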